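/- Let X_1 ∈ R^{d×d} have λ_min(X_1 + X_1^⊤) > 0, set q_1 = λ_min(X_1+X_1^⊤)/4, and let α_k = (k+1)^{−α} with α ∈ (0,1). Define K₁ = ⌈(λ_max(X_1^⊤X_1)/(λ_min(X_1+X_1^⊤) − 2q_1))^{1/α}⌉, μ₁ = −λ_min(X_1+X_1^⊤) + λ_max(X_1^⊤X_1), and C_θ = max{1, √(max_{ℓ₁ ≤ ℓ₂ ≤ K₁} ∏_{ℓ=ℓ₁}^{ℓ₂} e^{α_ℓ(μ₁+2q_1)})}. Then for any i ≤ n: ∏_{k=i}^n ‖I − α_k X_1‖ ≤ C_θ e^{−q_1 Σ_{k=i}^n α_k}. The analogous bound ∏_{k=i}^n ‖I − β_k W_2‖ ≤ C_w e^{−q_2 Σ_{k=i}^n β_k} holds with W_2, q_2 = λ_min(W_2+W_2^⊤)/4, β_k = (k+1)^{−β}, β ∈ (0,1), and the analogously defined constant C_w. -/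

import Mathlib

open Matrix
open scoped RealInnerProductSpace BigOperators

noncomputable section

abbrev E (d : ℕ) := EuclideanSpace ℝ (Fin d)

variable {d : ℕ}

/-- Apply a matrix to a vector of Euclidean space. -/
def app (A : Matrix (Fin d) (Fin d) ℝ) (x : E d) : E d :=
  Matrix.toEuclideanCLM (𝕜 := ℝ) A x

/-- The spectral (operator `2`-) norm of a matrix. -/
def opNorm (A : Matrix (Fin d) (Fin d) ℝ) : ℝ :=
  ‖Matrix.toEuclideanCLM (𝕜 := ℝ) A‖

/-- Smallest eigenvalue of a symmetric matrix (Rayleigh infimum over the unit sphere). -/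
def lambdaMin (A : Matrix (Fin d) (Fin d) ℝ) : ℝ :=
  ⨅ x : Metric.sphere (0 : E d) 1, ⟪(x : E d), app A (x : E d)⟫

/-- Largest eigenvalue of a symmetric matrix (Rayleigh supremum over the unit sphere). -/
def lambdaMax (A : Matrix (Fin d) (Fin d) ℝ) : ℝ :=
  ⨆ x : Metric.sphere (0 : E d) 1, ⟪(x : E d), app A (x : E d)⟫

/-- Stepsizes `(n+1)^{-a}`. -/
def steps (a : ℝ) (n : ℕ) : ℝ := ((n : ℝ) + 1) ^ (-a)

/-- `max_{ℓ₁ ≤ ℓ₂ ≤ K} ∏_{ℓ=ℓ₁}^{ℓ₂} e^{c α_ℓ}` (pairs violating `ℓ₁ ≤ ℓ₂` are padded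
with `1`, which does not change the final constant `max {1, √(this max)}`). -/
def pairMax (a c : ℝ) (K : ℕ) : ℝ :=
  (Finset.range (K + 1) ×ˢ Finset.range (K + 1)).sup'
    (Finset.nonempty_product.mpr
      ⟨Finset.nonempty_range_iff.mpr (Nat.succ_ne_zero _),
       Finset.nonempty_range_iff.mpr (Nat.succ_ne_zero _)⟩)
    (fun q => if q.1 ≤ q.2 then
        Real.exp (c * ∑ l ∈ Finset.Icc q.1 q.2, steps a l) else 1)

-- test lemmas
lemma lambdaMin_le (A : Matrix (Fin d) (Fin d) ℝ) {x : E d} (hx : ‖x‖ = 1) :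
    lambdaMin A ≤ ⟪x, app A x⟫ := by
  have hbdd : BddBelow (Set.range fun z : Metric.sphere (0 : E d) 1 =>
      ⟪(z : E d), app A (z : E d)⟫) := by
    refine ⟨-‖Matrix.toEuclideanCLM (𝕜 := ℝ) A‖, ?_⟩
    rintro y ⟨z, rfl⟩
    have hz : ‖(z : E d)‖ = 1 := by simpa using mem_sphere_zero_iff_norm.mp z.2
    have h1 : |⟪(z : E d), app A (z : E d)⟫| ≤ ‖(z : E d)‖ * ‖app A (z : E d)‖ :=
      abs_real_inner_le_norm _ _
    have h2 : ‖app A (z : E d)‖ ≤ ‖Matrix.toEuclideanCLM (𝕜 := ℝ) A‖ := by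
      have h := (Matrix.toEuclideanCLM (𝕜 := ℝ) A).le_opNorm (z : E d)
      rw [hz, mul_one] at h
      exact h
    have := neg_abs_le ⟪(z : E d), app A (z : E d)⟫
    simp only
    nlinarith [abs_nonneg ⟪(z : E d), app A (z : E d)⟫]
  have hmem : x ∈ Metric.sphere (0 : E d) 1 := by
    simp [mem_sphere_zero_iff_norm, hx]
  exact ciInf_le hbdd (⟨x, hmem⟩ : Metric.sphere (0 : E d) 1)

lemma le_lambdaMax (A : Matrix (Fin d) (Fin d) ℝ) {x : E d} (hx : ‖x‖ = 1) :
    ⟪x, app A x⟫ ≤ lambdaMax A := by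
  have hbdd : BddAbove (Set.range fun z : Metric.sphere (0 : E d) 1 =>
      ⟪(z : E d), app A (z : E d)⟫) := by
    refine ⟨‖Matrix.toEuclideanCLM (𝕜 := ℝ) A‖, ?_⟩
    rintro y ⟨z, rfl⟩
    have hz : ‖(z : E d)‖ = 1 := by simpa using mem_sphere_zero_iff_norm.mp z.2
    have h1 : |⟪(z : E d), app A (z : E d)⟫| ≤ ‖(z : E d)‖ * ‖app A (z : E d)‖ :=
      abs_real_inner_le_norm _ _
    have h2 : ‖app A (z : E d)‖ ≤ ‖Matrix.toEuclideanCLM (𝕜 := ℝ) A‖ := by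
      have h := (Matrix.toEuclideanCLM (𝕜 := ℝ) A).le_opNorm (z : E d)
      rw [hz, mul_one] at h
      exact h
    have := le_abs_self ⟪(z : E d), app A (z : E d)⟫
    simp only
    nlinarith [abs_nonneg ⟪(z : E d), app A (z : E d)⟫]
  have hmem : x ∈ Metric.sphere (0 : E d) 1 := by
    simp [mem_sphere_zero_iff_norm, hx]
  exact le_ciSup hbdd (⟨x, hmem⟩ : Metric.sphere (0 : E d) 1)

lemma inner_app_transpose (A : Matrix (Fin d) (Fin d) ℝ) (x y : E d) :
    ⟪x, app Aᵀ y⟫ = ⟪app A x, y⟫ := by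
  have h1 : Aᵀ = Aᴴ := (Matrix.conjTranspose_eq_transpose_of_trivial A).symm
  have h2 : Matrix.toEuclideanCLM (𝕜 := ℝ) Aᴴ
      = star (Matrix.toEuclideanCLM (𝕜 := ℝ) A) := by
    rw [← Matrix.star_eq_conjTranspose, map_star]
  rw [app, h1, h2, ContinuousLinearMap.star_eq_adjoint,
    ContinuousLinearMap.adjoint_inner_right]
  rfl

lemma norm_app_sq (X : Matrix (Fin d) (Fin d) ℝ) (s : ℝ) {x : E d} (hx : ‖x‖ = 1) :
    ‖app (1 - s • X) x‖ ^ 2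
      = 1 - s * ⟪x, app (X + Xᵀ) x⟫ + s ^ 2 * ⟪x, app (Xᵀ * X) x⟫ := by
  have happ : app (1 - s • X) x = x - s • app X x := by
    simp [app, map_sub, _root_.map_smul]
  have hT : ⟪x, app (X + Xᵀ) x⟫ = 2 * ⟪x, app X x⟫ := by
    have : app (X + Xᵀ) x = app X x + app Xᵀ x := by simp [app, map_add]
    rw [this, inner_add_right, inner_app_transpose, real_inner_comm (app X x) x]
    ring
  have hM : ⟪x, app (Xᵀ * X) x⟫ = ‖app X x‖ ^ 2 := by
    have : app (Xᵀ * X) x = app Xᵀ (app X x) := by simp only [app]; rw [_root_.map_mul]; rfl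
    rw [this, inner_app_transpose, real_inner_self_eq_norm_sq]
  rw [happ, norm_sub_sq_real, hx, hT, hM, real_inner_smul_right, norm_smul]
  simp [mul_pow]
  ring

lemma opNorm_le_sqrt (X : Matrix (Fin d) (Fin d) ℝ) {s : ℝ} (hs : 0 ≤ s) :
    opNorm (1 - s • X) ≤
      Real.sqrt (1 - s * lambdaMin (X + Xᵀ) + s ^ 2 * lambdaMax (Xᵀ * X)) := by
  rw [opNorm]
  apply ContinuousLinearMap.opNorm_le_of_unit_norm (Real.sqrt_nonneg _)
  intro x hx
  have h1 : ‖app (1 - s • X) x‖ ^ 2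
      ≤ 1 - s * lambdaMin (X + Xᵀ) + s ^ 2 * lambdaMax (Xᵀ * X) := by
    rw [norm_app_sq X s hx]
    have h2 := lambdaMin_le (X + Xᵀ) hx
    have h3 := le_lambdaMax (Xᵀ * X) hx
    nlinarith [sq_nonneg s]
  calc ‖app (1 - s • X) x‖ = Real.sqrt (‖app (1 - s • X) x‖ ^ 2) :=
        (Real.sqrt_sq (norm_nonneg _)).symm
    _ ≤ _ := Real.sqrt_le_sqrt h1

lemma lambdaMax_nonneg (hd : 0 < d) (X : Matrix (Fin d) (Fin d) ℝ) :
    0 ≤ lambdaMax (Xᵀ * X) := by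
  set x : E d := EuclideanSpace.single ⟨0, hd⟩ (1 : ℝ) with hxdef
  have hx : ‖x‖ = 1 := by simp [hxdef]
  have h1 : ⟪x, app (Xᵀ * X) x⟫ = ‖app X x‖ ^ 2 := by
    have : app (Xᵀ * X) x = app Xᵀ (app X x) := by simp only [app]; rw [_root_.map_mul]; rfl
    rw [this, inner_app_transpose, real_inner_self_eq_norm_sq]
  have := le_lambdaMax (Xᵀ * X) hx
  rw [h1] at this
  nlinarith [sq_nonneg ‖app X x‖]

lemma sqrt_exp' (t : ℝ) : Real.sqrt (Real.exp t) = Real.exp (t / 2) := by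
  have h : (Real.exp (t / 2)) ^ 2 = Real.exp t := by
    rw [sq, ← Real.exp_add]; ring_nf
  rw [← h, Real.sqrt_sq (Real.exp_nonneg _)]

lemma steps_pos (a : ℝ) (k : ℕ) : 0 < steps a k := by
  apply Real.rpow_pos_of_pos; positivity

lemma steps_le_one {a : ℝ} (ha : 0 ≤ a) (k : ℕ) : steps a k ≤ 1 := by
  apply Real.rpow_le_one_of_one_le_of_nonpos
  · norm_num
  · linarith

lemma main_bound (hd : 0 < d) (X : Matrix (Fin d) (Fin d) ℝ) {a : ℝ}
    (ha0 : 0 < a) (hX : 0 < lambdaMin (X + Xᵀ))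
    (q : ℝ) (hq : q = lambdaMin (X + Xᵀ) / 4)
    (K : ℕ) (hK : K = ⌈(lambdaMax (Xᵀ * X) / (lambdaMin (X + Xᵀ) - 2 * q)) ^ (1 / a)⌉₊)
    (μ : ℝ) (hμ : μ = -lambdaMin (X + Xᵀ) + lambdaMax (Xᵀ * X))
    (C : ℝ) (hC : C = max 1 (Real.sqrt (pairMax a (μ + 2 * q) K)))
    (i n : ℕ) (hin : i ≤ n) :
    ∏ k ∈ Finset.Icc i n, opNorm (1 - steps a k • X) ≤
      C * Real.exp (-q * ∑ k ∈ Finset.Icc i n, steps a k) := by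
  set lmn := lambdaMin (X + Xᵀ) with hlmn
  set lMx := lambdaMax (Xᵀ * X) with hlMx
  have hq0 : 0 < q := by rw [hq]; linarith
  have hM0 : 0 ≤ lMx := lambdaMax_nonneg hd X
  have h_all : ∀ k : ℕ, opNorm (1 - steps a k • X) ≤
      Real.exp (steps a k * (μ + 2 * q) / 2) * Real.exp (-q * steps a k) := by
    intro k
    set s := steps a k with hs
    have hs0 : 0 < s := steps_pos a k
    have hs1 : s ≤ 1 := steps_le_one ha0.le k
    have h1 := opNorm_le_sqrt X (s := s) hs0.le
    have h2 : 1 - s * lmn + s ^ 2 * lMx ≤ Real.exp (s * μ) := by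
      have h2a : 1 - s * lmn + s ^ 2 * lMx ≤ 1 + s * μ := by
        rw [hμ]
        nlinarith [mul_nonneg (mul_nonneg (sub_nonneg.mpr hs1) hs0.le) hM0]
      have h3 := Real.add_one_le_exp (s * μ)
      linarith
    have h4 : Real.sqrt (1 - s * lmn + s ^ 2 * lMx) ≤ Real.exp (s * μ / 2) := by
      calc Real.sqrt (1 - s * lmn + s ^ 2 * lMx) ≤ Real.sqrt (Real.exp (s * μ)) :=
            Real.sqrt_le_sqrt h2
        _ = Real.exp (s * μ / 2) := sqrt_exp' _
    have h5 : Real.exp (s * μ / 2)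
        = Real.exp (s * (μ + 2 * q) / 2) * Real.exp (-q * s) := by
      rw [← Real.exp_add]; ring_nf
    rw [← h5]
    exact h1.trans h4
  have h_good : ∀ k : ℕ, K ≤ k →
      opNorm (1 - steps a k • X) ≤ Real.exp (-q * steps a k) := by
    intro k hk
    set s := steps a k with hs
    have hs0 : 0 < s := steps_pos a k
    have hpa : 0 < ((k : ℝ) + 1) ^ a := Real.rpow_pos_of_pos (by positivity) a
    have hsinv : s = (((k : ℝ) + 1) ^ a)⁻¹ := by
      rw [hs, steps, Real.rpow_neg (by positivity)]
    have hprod : s * (((k : ℝ) + 1) ^ a) = 1 := by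
      rw [hsinv]; field_simp
    have hsM : s * lMx ≤ 2 * q := by
      rcases eq_or_lt_of_le hM0 with h | h
      · nlinarith
      · set r := lMx / (lmn - 2 * q) with hr
        have hr' : r = lMx / (2 * q) := by rw [hr, hq]; ring_nf
        have hr0 : 0 < r := by rw [hr']; positivity
        have hceil : r ^ (1 / a) ≤ (K : ℝ) := by rw [hK]; exact Nat.le_ceil _
        have hk1 : r ^ (1 / a) < (k : ℝ) + 1 := by
          calc r ^ (1 / a) ≤ (K : ℝ) := hceil
            _ ≤ (k : ℝ) := by exact_mod_cast hk
            _ < (k : ℝ) + 1 := by linarith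
        have hpow : r < ((k : ℝ) + 1) ^ a := by
          have h6 := Real.rpow_lt_rpow (Real.rpow_nonneg hr0.le _) hk1 ha0
          rwa [← Real.rpow_mul hr0.le, one_div_mul_cancel ha0.ne', Real.rpow_one] at h6
        have hlMxlt : lMx < 2 * q * (((k : ℝ) + 1) ^ a) := by
          have h7 : lMx = r * (2 * q) := by rw [hr']; field_simp
          nlinarith
        nlinarith [mul_lt_mul_of_pos_left hlMxlt hs0]
    have h1 := opNorm_le_sqrt X (s := s) hs0.le
    have h2 : 1 - s * lmn + s ^ 2 * lMx ≤ Real.exp (-(2 * q * s)) := by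
      have hlmn4 : lmn = 4 * q := by rw [hq]; ring
      have h2a : 1 - s * lmn + s ^ 2 * lMx ≤ 1 - 2 * q * s := by
        rw [hlmn4]
        nlinarith [mul_le_mul_of_nonneg_left hsM hs0.le]
      have h3 := Real.add_one_le_exp (-(2 * q * s))
      linarith
    have h4 : Real.sqrt (Real.exp (-(2 * q * s))) = Real.exp (-q * s) := by
      rw [sqrt_exp']; congr 1; ring
    calc opNorm (1 - s • X) ≤ Real.sqrt (1 - s * lmn + s ^ 2 * lMx) := h1
      _ ≤ Real.sqrt (Real.exp (-(2 * q * s))) := Real.sqrt_le_sqrt h2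
      _ = Real.exp (-q * s) := h4
  have hC1 : 1 ≤ C := by rw [hC]; exact le_max_left _ _
  calc ∏ k ∈ Finset.Icc i n, opNorm (1 - steps a k • X)
      ≤ ∏ k ∈ Finset.Icc i n,
          ((if k < K then Real.exp (steps a k * (μ + 2 * q) / 2) else 1) *
            Real.exp (-q * steps a k)) := by
        apply Finset.prod_le_prod
        · intro k _; exact norm_nonneg _
        · intro k _
          by_cases hk : k < K
          · rw [if_pos hk]; exact h_all k
          · rw [if_neg hk, one_mul]; exact h_good k (not_lt.mp hk)
    _ = (∏ k ∈ Finset.Icc i n,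
          (if k < K then Real.exp (steps a k * (μ + 2 * q) / 2) else 1)) *
          ∏ k ∈ Finset.Icc i n, Real.exp (-q * steps a k) := Finset.prod_mul_distrib
    _ ≤ C * Real.exp (-q * ∑ k ∈ Finset.Icc i n, steps a k) := by
        rw [← Real.exp_sum, ← Finset.mul_sum]
        apply mul_le_mul_of_nonneg_right ?_ (Real.exp_nonneg _)
        rw [← Finset.prod_filter]
        rcases Finset.eq_empty_or_nonempty
            ((Finset.Icc i n).filter (· < K)) with he | hne
        · rw [he, Finset.prod_empty]; exact hC1
        · obtain ⟨k0, hk0⟩ := hne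
          simp only [Finset.mem_filter, Finset.mem_Icc] at hk0
          have hK1 : 1 ≤ K := by omega
          set m := min n (K - 1) with hm
          have hfe : (Finset.Icc i n).filter (· < K) = Finset.Icc i m := by
            ext k
            simp only [Finset.mem_filter, Finset.mem_Icc, hm, le_min_iff,
              Finset.mem_Icc]
            omega
          rw [hfe]
          have him : i ≤ m := by omega
          rw [← Real.exp_sum]
          have hsum : ∑ l ∈ Finset.Icc i m, steps a l * (μ + 2 * q) / 2
              = ((μ + 2 * q) * ∑ l ∈ Finset.Icc i m, steps a l) / 2 := by
            rw [Finset.mul_sum, ← Finset.sum_div]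
            congr 1
            apply Finset.sum_congr rfl
            intro l _; ring
          rw [hsum, ← sqrt_exp']
          have hle : Real.exp ((μ + 2 * q) * ∑ l ∈ Finset.Icc i m, steps a l)
              ≤ pairMax a (μ + 2 * q) K := by
            have hmem : ((i, m) : ℕ × ℕ) ∈
                Finset.range (K + 1) ×ˢ Finset.range (K + 1) := by
              simp only [Finset.mem_product, Finset.mem_range]
              omega
            have h8 := Finset.le_sup'
              (f := fun p : ℕ × ℕ => if p.1 ≤ p.2 then
                Real.exp ((μ + 2 * q) * ∑ l ∈ Finset.Icc p.1 p.2, steps a l) else 1)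
              hmem
            unfold pairMax
            refine le_trans (le_of_eq ?_) h8
            simp [him]
          calc Real.sqrt (Real.exp ((μ + 2 * q) * ∑ l ∈ Finset.Icc i m, steps a l))
              ≤ Real.sqrt (pairMax a (μ + 2 * q) K) := Real.sqrt_le_sqrt hle
            _ ≤ C := by rw [hC]; exact le_max_right _ _

/-- Lemma `Dn bounds`.
Let `X₁` have `λ_min (X₁ + X₁ᵀ) > 0`, `q₁ = λ_min(X₁+X₁ᵀ)/4`, `α_k = (k+1)^{−α}` with
`α ∈ (0,1)`, `K₁ = ⌈(λ_max(X₁ᵀX₁)/(λ_min(X₁+X₁ᵀ) − 2q₁))^{1/α}⌉`,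
`μ₁ = −λ_min(X₁+X₁ᵀ) + λ_max(X₁ᵀX₁)` and
`C_θ = max {1, √(max_{ℓ₁ ≤ ℓ₂ ≤ K₁} ∏_{ℓ=ℓ₁}^{ℓ₂} e^{α_ℓ(μ₁+2q₁)})}`.  Then for any
`i ≤ n`, `∏_{k=i}^n ‖I − α_k X₁‖ ≤ C_θ e^{−q₁ Σ_{k=i}^n α_k}`.  The analogous bound
holds with `W₂`, `q₂ = λ_min(W₂+W₂ᵀ)/4`, `β_k = (k+1)^{−β}`, `β ∈ (0,1)`, and the
analogously defined constant `C_w`. -/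
theorem stmt9 {d : ℕ} (hd : 0 < d) (X1 W2 : Matrix (Fin d) (Fin d) ℝ)
    (α β : ℝ) (hα0 : 0 < α) (hα1 : α < 1) (hβ0 : 0 < β) (hβ1 : β < 1)
    (hX1 : 0 < lambdaMin (X1 + X1ᵀ)) (hW2 : 0 < lambdaMin (W2 + W2ᵀ))
    (q1 q2 : ℝ) (hq1 : q1 = lambdaMin (X1 + X1ᵀ) / 4) (hq2 : q2 = lambdaMin (W2 + W2ᵀ) / 4)
    (K1 K2 : ℕ)
    (hK1 : K1 = ⌈(lambdaMax (X1ᵀ * X1) / (lambdaMin (X1 + X1ᵀ) - 2 * q1)) ^ (1 / α)⌉₊)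
    (hK2 : K2 = ⌈(lambdaMax (W2ᵀ * W2) / (lambdaMin (W2 + W2ᵀ) - 2 * q2)) ^ (1 / β)⌉₊)
    (μ1 μ2 : ℝ)
    (hμ1 : μ1 = -lambdaMin (X1 + X1ᵀ) + lambdaMax (X1ᵀ * X1))
    (hμ2 : μ2 = -lambdaMin (W2 + W2ᵀ) + lambdaMax (W2ᵀ * W2))
    (Cθ Cw : ℝ)
    (hCθ : Cθ = max 1 (Real.sqrt (pairMax α (μ1 + 2 * q1) K1)))
    (hCw : Cw = max 1 (Real.sqrt (pairMax β (μ2 + 2 * q2) K2))) :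
    (∀ i n : ℕ, i ≤ n →
      ∏ k ∈ Finset.Icc i n, opNorm (1 - steps α k • X1) ≤
        Cθ * Real.exp (-q1 * ∑ k ∈ Finset.Icc i n, steps α k)) ∧
    (∀ i n : ℕ, i ≤ n →
      ∏ k ∈ Finset.Icc i n, opNorm (1 - steps β k • W2) ≤
        Cw * Real.exp (-q2 * ∑ k ∈ Finset.Icc i n, steps β k)) := by
  constructor
  · intro i n hin
    exact main_bound hd X1 hα0 hX1 q1 hq1 K1 hK1 μ1 hμ1 Cθ hCθ i n hin
  · intro i n hin
    exact main_bound hd W2 hβ0 hW2 q2 hq2 K2 hK2 μ2 hμ2 Cw hCw i n hin
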